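/- For an interdependent n-person game under the learning dynamics, for every 0 < m < n and every two distinct states z^m_1, z^m_2 ∈ C^m, the resistance between the singleton recurrence classes {z^m_1} and {z^m_2} satisfies c ≤ r_{z^m_1 z^m_2} ≤ r̄_m, where r̄_m = m·c² + ((4 + m − m²)/2)·c − m(m+1)/2. -/

import Mathlib

open scoped Classical
open Filter Topology

namespace Paper

/-- Mood of an agent: content or discontent. -/
inductive Mood where
  | content : Mood
  | discontent : Mood
deriving DecidableEq

/-- The internal state of a single agent: a baseline action, a baseline utility and a mood. -/
structure AgentState (α : Type*) where
  act : α
  util : ℝ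
  mood : Mood

variable {n : ℕ} {A : Fin n → Type*} {W : Type*}

/-- Joint state of all agents. -/
abbrev JState (A : Fin n → Type*) := ∀ i, AgentState (A i)

/-- The baseline (joint) action profile of a joint state. -/
def prof (z : JState A) : ∀ j, A j := fun j => (z j).act

def allContent (z : JState A) : Prop := ∀ i, (z i).mood = Mood.content

def allDiscontent (z : JState A) : Prop := ∀ i, (z i).mood = Mood.discontent

variable [∀ i, Fintype (A i)] [Fintype W]

/-- The network welfare of an action profile under a disturbance. -/
def welfare (U : ∀ i : Fin n, (∀ j, A j) → W → ℝ) (a : ∀ j, A j) (w : W) : ℝ :=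
  ∑ i, U i a w

/-- ρ : the smallest real `r` such that `|U i a w₁ − U i a w₂| ≤ r` for all `i`, `a`, `w₁`, `w₂`. -/
noncomputable def rho (U : ∀ i : Fin n, (∀ j, A j) → W → ℝ) : ℝ :=
  sInf {r : ℝ | ∀ (i : Fin n) (a : ∀ j, A j) (w₁ w₂ : W), |U i a w₁ - U i a w₂| ≤ r}

/-- Interdependence of the n-person game subject to disturbances. -/
def Interdependent (U : ∀ i : Fin n, (∀ j, A j) → W → ℝ) : Prop :=
  ∀ (a : ∀ j, A j) (w : W) (J : Set (Fin n)), J.Nonempty → J ≠ Set.univ →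
    ∃ i ∉ J, ∃ a' : ∀ j, A j, (∀ j ∉ J, a' j = a j) ∧
      ∃ w' : W, |U i a' w' - U i a w| > rho U

/-- Probability that agent `i` in state `zi` plays action `ai`, with experimentation
rate `ε` and constant `c`: a content agent plays its baseline action with probability
`1 − ε^c` and each other action with probability `ε^c/(|A i| − 1)`; a discontent agent
plays each action with probability `1/|A i|`. -/
noncomputable def actProb (c ε : ℝ) {i : Fin n} (zi : AgentState (A i)) (ai : A i) : ℝ :=
  match zi.mood with
  | Mood.content =>
      if ai = zi.act then 1 - ε ^ c else ε ^ c / ((Fintype.card (A i) : ℝ) - 1)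
  | Mood.discontent => 1 / (Fintype.card (A i) : ℝ)

/-- Probability that agent `i` moves from state `zi` to state `zi'` after playing action `ai`
and receiving payoff `u`: a content agent that played its baseline action and received a
payoff within `ρ` of its baseline keeps its state; otherwise the state becomes
`[ai, u, content]` with probability `ε^(1−u)` and `[ai, u, discontent]` with
probability `1 − ε^(1−u)`. -/
noncomputable def updProb (ρ ε : ℝ) {i : Fin n} (zi zi' : AgentState (A i))
    (ai : A i) (u : ℝ) : ℝ :=
  if zi.mood = Mood.content ∧ ai = zi.act ∧ |u - zi.util| ≤ ρ then
    (if zi' = zi then 1 else 0)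
  else if zi' = ⟨ai, u, Mood.content⟩ then ε ^ (1 - u)
  else if zi' = ⟨ai, u, Mood.discontent⟩ then 1 - ε ^ (1 - u)
  else 0

/-- One-step transition probability `P^ε z z'` of the joint learning dynamics, averaging
over the joint action chosen and the i.i.d. disturbance with law `Prw`.
At `ε = 0` this is the unperturbed chain `P^0` (the entrywise limit as `ε → 0`). -/
noncomputable def P (U : ∀ i : Fin n, (∀ j, A j) → W → ℝ) (Prw : W → ℝ) (c : ℝ)
    (ε : ℝ) (z z' : JState A) : ℝ :=
  ∑ a : ∀ j, A j, ∑ w : W,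
    (∏ i, actProb c ε (z i) (a i)) * Prw w *
      (∏ i, updProb (rho U) ε (z i) (z' i) (a i) (U i a w))

variable (U : ∀ i : Fin n, (∀ j, A j) → W → ℝ) (Prw : W → ℝ) (c : ℝ)

/-- One-step transition with positive probability under the perturbed dynamics. -/
def stepPos (x y : JState A) : Prop := ∃ ε ∈ Set.Ioo (0:ℝ) 1, 0 < P U Prw c ε x y

/-- A joint state is valid if each baseline utility lies in the range of the
corresponding utility function. -/
def ValidState (z : JState A) : Prop := ∀ i, ∃ (a : ∀ j, A j) (w : W), U i a w = (z i).util

/-- The joint state space `Z`: joint states reachable with positive probability (in some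
positive number of steps) from a joint state in which all agents are discontent. -/
def SSpace : Set (JState A) :=
  {z | ∃ z₀ : JState A, ValidState U z₀ ∧ allDiscontent z₀ ∧
        Relation.TransGen (stepPos U Prw c) z₀ z}

/-- The set `D` of all-discontent joint states in `Z`. -/
def Dset : Set (JState A) := {z | z ∈ SSpace U Prw c ∧ allDiscontent z}

/-- The set `B i`: states whose baseline utility for agent `i` is aligned with the baseline
action profile for some disturbance and within `ρ` of it for every disturbance. -/
def Bset (i : Fin n) : Set (JState A) :=
  {z | z ∈ SSpace U Prw c ∧ (∃ w : W, (z i).util = U i (prof z) w) ∧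
       ∀ w' : W, |(z i).util - U i (prof z) w'| ≤ rho U}

/-- The content classes `C^m`. -/
def Cm : ℕ → Set (JState A)
  | 0 => {z | z ∈ SSpace U Prw c ∧ allContent z ∧ ∀ i, z ∈ Bset U Prw c i}
  | (m+1) => {z | z ∈ SSpace U Prw c ∧ allContent z ∧
      ∃ J : Fin (m+2) → Finset (Fin n),
        (∀ k, (J k).Nonempty) ∧
        (∀ k l, k ≠ l → Disjoint (J k) (J l)) ∧
        (Finset.univ.biUnion J = Finset.univ) ∧
        (∀ j ∈ J (Fin.last (m+1)), z ∈ Bset U Prw c j) ∧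
        ∃ z' ∈ Cm m, ∀ j ∉ J (Fin.last (m+1)),
          z j = z' j ∧ ∀ w' : W, |(z' j).util - U j (prof z) w'| ≤ rho U}

/-- One-step transition with positive probability under the unperturbed chain `P^0`. -/
def step0 (x y : JState A) : Prop := 0 < P U Prw c 0 x y

/-- Reachability (in zero or more steps) under the unperturbed chain `P^0`. -/
def Reach0 : JState A → JState A → Prop := Relation.ReflTransGen (step0 U Prw c)

/-- A state is recurrent for `P^0` if every state reachable from it can reach it back. -/
def Recurrent0 (x : JState A) : Prop := ∀ y, Reach0 U Prw c x y → Reach0 U Prw c y x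

/-- Recurrence classes of the unperturbed chain `P^0` on `Z`. -/
def RecClass (Cl : Set (JState A)) : Prop :=
  ∃ x ∈ SSpace U Prw c, Recurrent0 U Prw c x ∧
    Cl = {y | y ∈ SSpace U Prw c ∧ Reach0 U Prw c x y}

/- Generic Markov chain notions. -/

/-- `k`-step reachability (through positive-probability transitions) for a kernel `Q`. -/
def MReachN {X : Type*} (Q : X → X → ℝ) : ℕ → X → X → Prop
  | 0 => fun x y => x = y
  | (k+1) => fun x y => ∃ z, 0 < Q x z ∧ MReachN Q k z y

/-- Irreducibility of a kernel on a set of states. -/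
def MIrreducibleOn {X : Type*} (Q : X → X → ℝ) (S : Set X) : Prop :=
  ∀ x ∈ S, ∀ y ∈ S, ∃ k, 0 < k ∧ MReachN Q k x y

/-- Aperiodicity of a kernel on a set of states: the return times to each state
have greatest common divisor 1. -/
def MAperiodicOn {X : Type*} (Q : X → X → ℝ) (S : Set X) : Prop :=
  ∀ x ∈ S, ∀ d : ℕ, (∀ k, 0 < k → MReachN Q k x x → d ∣ k) → d = 1

/-- Reachability for a kernel `Q`. -/
def MReach {X : Type*} (Q : X → X → ℝ) : X → X → Prop :=
  Relation.ReflTransGen (fun x y => 0 < Q x y)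

/-- Recurrent state of a kernel. -/
def MRecurrent {X : Type*} (Q : X → X → ℝ) (x : X) : Prop :=
  ∀ y, MReach Q x y → MReach Q y x

/-- Recurrence class of a kernel. -/
def MRecClass {X : Type*} (Q : X → X → ℝ) (Cl : Set X) : Prop :=
  ∃ x, MRecurrent Q x ∧ Cl = {y | MReach Q x y}

/-- Stationary distribution of a kernel on a finite type. -/
def MStationary {X : Type*} [Fintype X] (Q : X → X → ℝ) (μ : X → ℝ) : Prop :=
  (∀ x, 0 ≤ μ x) ∧ (∑ x, μ x) = 1 ∧ ∀ y, (∑ x, μ x * Q x y) = μ y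

/-- Stationary distribution of a kernel supported on a set `S`. -/
def IsStationaryOn {X : Type*} (Q : X → X → ℝ) (S : Set X) (μ : X → ℝ) : Prop :=
  (∀ x, 0 ≤ μ x) ∧ (∀ x ∉ S, μ x = 0) ∧ (∑ᶠ x ∈ S, μ x) = 1 ∧
    ∀ y ∈ S, (∑ᶠ x ∈ S, μ x * Q x y) = μ y

/-- `r` is the resistance of the transition `x → y` for the family of kernels `Pf ε`:
`0 < lim_{ε→0⁺} ε^{−r} Pf ε x y < ∞`. -/
def FamTransRes {X : Type*} (Pf : ℝ → X → X → ℝ) (x y : X) (r : ℝ) : Prop :=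
  ∃ L : ℝ, 0 < L ∧
    Tendsto (fun ε : ℝ => Pf ε x y / ε ^ r) (𝓝[>] (0:ℝ)) (𝓝 L)

/-- `PathRes R x y r`: there is a path (of one or more transitions) from `x` to `y`
whose transitions have resistances (in the sense of `R`) summing to `r`. -/
inductive PathRes {X : Type*} (R : X → X → ℝ → Prop) : X → X → ℝ → Prop
  | single {x y : X} {r : ℝ} : R x y r → PathRes R x y r
  | cons {x y z : X} {r s : ℝ} : R x y r → PathRes R y z s → PathRes R x z (r + s)

/-- `ClassResIs R S T r` : `r` is the minimum path resistance over paths from a state of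
`S` to a state of `T`. -/
def ClassResIs {X : Type*} (R : X → X → ℝ → Prop) (S T : Set X) (r : ℝ) : Prop :=
  (∃ x ∈ S, ∃ y ∈ T, PathRes R x y r) ∧
    ∀ x ∈ S, ∀ y ∈ T, ∀ r', PathRes R x y r' → r ≤ r'

/-- Resistance of a transition for the learning dynamics. -/
def TransRes (x y : JState A) (r : ℝ) : Prop := FamTransRes (P U Prw c) x y r

/- Trees over recurrence classes and stochastic potential. -/

/-- An `ℓ`-tree over the collection `RC` of recurrence classes, rooted at `root`, encoded by a
parent map: every non-root class has exactly one outgoing edge (to its parent), and following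
parents from any class leads to the root. -/
def IsLTree {X : Type*} (RC : Set (Set X)) (root : Set X) (par : Set X → Set X) : Prop :=
  root ∈ RC ∧ par root = root ∧ (∀ Cl ∈ RC, par Cl ∈ RC) ∧
    ∀ Cl ∈ RC, ∃ k : ℕ, par^[k] Cl = root

/-- Total resistance of a tree: sum over non-root classes of the resistance of the
edge to the parent, where `rfun C₁ C₂` is the resistance between classes `C₁` and `C₂`. -/
noncomputable def treeRes {X : Type*} (RC : Set (Set X)) (rfun : Set X → Set X → ℝ)
    (root : Set X) (par : Set X → Set X) : ℝ :=
  ∑ᶠ Cl ∈ {Cl | Cl ∈ RC ∧ Cl ≠ root}, rfun Cl (par Cl)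

/-- Stochastic potential of the recurrence class `root`: minimum total resistance over
trees rooted at `root`. -/
noncomputable def stochPot {X : Type*} (RC : Set (Set X)) (rfun : Set X → Set X → ℝ)
    (root : Set X) : ℝ :=
  sInf {s | ∃ par, IsLTree RC root par ∧ s = treeRes RC rfun root par}

/- Trees over recurrence classes indexed by `Fin L`. -/

/-- An `ℓ`-tree on vertex set `Fin L` rooted at `root`, encoded by a parent map. -/
def IsLTreeFin {L : ℕ} (root : Fin L) (par : Fin L → Fin L) : Prop :=
  par root = root ∧ ∀ v, ∃ k : ℕ, par^[k] v = root

/-- Total resistance of a tree on `Fin L`. -/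
noncomputable def treeResFin {L : ℕ} (r : Fin L → Fin L → ℝ) (root : Fin L)
    (par : Fin L → Fin L) : ℝ :=
  ∑ v ∈ Finset.univ.filter (fun v => v ≠ root), r v (par v)

/-- Stochastic potential of the recurrence class indexed by `root`. -/
noncomputable def stochPotFin {L : ℕ} (r : Fin L → Fin L → ℝ) (root : Fin L) : ℝ :=
  sInf {s | ∃ par, IsLTreeFin root par ∧ s = treeResFin r root par}

end Paper

namespace Paper

/-! ### Auxiliary machinery for the proof of Statement 12 -/

section AuxStatement12

variable {n : ℕ} {A : Fin n → Type*} {W : Type*}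
variable [∀ i, Fintype (A i)] [∀ i, Nonempty (A i)] [Fintype W] [Nonempty W]

/-! #### Bounds on `rho` -/

lemma abs_le_rho (U : ∀ i : Fin n, (∀ j, A j) → W → ℝ)
    (hU : ∀ (i : Fin n) (a : ∀ j, A j) (w : W), U i a w ∈ Set.Ico (0:ℝ) 1)
    (i : Fin n) (a : ∀ j, A j) (w₁ w₂ : W) : |U i a w₁ - U i a w₂| ≤ rho U := by
  apply le_csInf
  · refine ⟨1, fun i a w₁ w₂ => ?_⟩
    have h1 := hU i a w₁; have h2 := hU i a w₂
    rw [Set.mem_Ico] at h1 h2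
    rw [abs_le]; constructor <;> linarith
  · exact fun r hr => hr i a w₁ w₂

/-! #### Pointwise description of `actProb` and `updProb` -/

lemma actProb_eq_content (c ε : ℝ) {i : Fin n} {zi : AgentState (A i)}
    (h : zi.mood = Mood.content) (ai : A i) :
    actProb c ε zi ai =
      if ai = zi.act then 1 - ε ^ c else ε ^ c / ((Fintype.card (A i) : ℝ) - 1) := by
  rcases zi with ⟨za, zu, zm⟩
  cases zm
  · rfl
  · exact absurd h (by simp)

lemma actProb_eq_discontent (c ε : ℝ) {i : Fin n} {zi : AgentState (A i)}
    (h : zi.mood = Mood.discontent) (ai : A i) :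
    actProb c ε zi ai = 1 / (Fintype.card (A i) : ℝ) := by
  rcases zi with ⟨za, zu, zm⟩
  cases zm
  · exact absurd h (by simp)
  · rfl

lemma mood_eq_or (m : Mood) : m = Mood.content ∨ m = Mood.discontent := by
  cases m <;> simp

lemma updProb_keep {ρ ε : ℝ} {i : Fin n} {zi zi' : AgentState (A i)} {ai : A i} {u : ℝ}
    (h : zi.mood = Mood.content ∧ ai = zi.act ∧ |u - zi.util| ≤ ρ) :
    updProb ρ ε zi zi' ai u = if zi' = zi then 1 else 0 := by
  unfold updProb; rw [if_pos h]

lemma updProb_acc {ρ ε : ℝ} {i : Fin n} {zi zi' : AgentState (A i)} {ai : A i} {u : ℝ}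
    (h : ¬(zi.mood = Mood.content ∧ ai = zi.act ∧ |u - zi.util| ≤ ρ))
    (h2 : zi' = ⟨ai, u, Mood.content⟩) :
    updProb ρ ε zi zi' ai u = ε ^ (1 - u) := by
  unfold updProb; rw [if_neg h, if_pos h2]

lemma updProb_rej {ρ ε : ℝ} {i : Fin n} {zi zi' : AgentState (A i)} {ai : A i} {u : ℝ}
    (h : ¬(zi.mood = Mood.content ∧ ai = zi.act ∧ |u - zi.util| ≤ ρ))
    (h2 : zi' = ⟨ai, u, Mood.discontent⟩) :
    updProb ρ ε zi zi' ai u = 1 - ε ^ (1 - u) := by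
  have h3 : zi' ≠ ⟨ai, u, Mood.content⟩ := by rw [h2]; simp
  unfold updProb; rw [if_neg h, if_neg h3, if_pos h2]

/-! #### Elementary bounds on the transition factors -/

lemma card_real_pos (i : Fin n) : (0:ℝ) < (Fintype.card (A i) : ℝ) := by
  have : 0 < Fintype.card (A i) := Fintype.card_pos
  exact_mod_cast this

lemma actProb_nonneg {c : ℝ} (hc0 : 0 < c) {ε : ℝ} (hε0 : 0 ≤ ε) (hε1 : ε ≤ 1)
    {i : Fin n} (zi : AgentState (A i)) (ai : A i) : 0 ≤ actProb c ε zi ai := by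
  rcases mood_eq_or zi.mood with h | h
  · rw [actProb_eq_content c ε h]
    split_ifs
    · have : ε ^ c ≤ 1 := Real.rpow_le_one hε0 hε1 hc0.le
      linarith
    · apply div_nonneg (Real.rpow_nonneg hε0 c)
      have : (1:ℝ) ≤ (Fintype.card (A i) : ℝ) := by
        have : 0 < Fintype.card (A i) := Fintype.card_pos
        exact_mod_cast this
      linarith
  · rw [actProb_eq_discontent c ε h]
    positivity

lemma actProb_le_one {c : ℝ} (hc0 : 0 < c) {ε : ℝ} (hε0 : 0 ≤ ε) (hε1 : ε ≤ 1)
    {i : Fin n} (zi : AgentState (A i)) (ai : A i) : actProb c ε zi ai ≤ 1 := by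
  have hpow0 : 0 ≤ ε ^ c := Real.rpow_nonneg hε0 c
  have hpow1 : ε ^ c ≤ 1 := Real.rpow_le_one hε0 hε1 hc0.le
  rcases mood_eq_or zi.mood with h | h
  · rw [actProb_eq_content c ε h]
    split_ifs
    · linarith
    · rcases Nat.lt_or_ge (Fintype.card (A i)) 2 with hcard | hcard
      · have h1 : Fintype.card (A i) = 1 := by
          have : 0 < Fintype.card (A i) := Fintype.card_pos
          omega
        rw [h1]; norm_num
      · have h2 : (2:ℝ) ≤ (Fintype.card (A i) : ℝ) := by exact_mod_cast hcard
        rw [div_le_one (by linarith)]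
        linarith
  · rw [actProb_eq_discontent c ε h]
    rw [div_le_one (card_real_pos i)]
    have : (1:ℝ) ≤ (Fintype.card (A i) : ℝ) := by
      have : 0 < Fintype.card (A i) := Fintype.card_pos
      exact_mod_cast this
    linarith

lemma updProb_nonneg {ρ ε u : ℝ} (hε0 : 0 ≤ ε) (hε1 : ε ≤ 1) (hu : u ≤ 1)
    {i : Fin n} (zi zi' : AgentState (A i)) (ai : A i) : 0 ≤ updProb ρ ε zi zi' ai u := by
  have h1 : 0 ≤ ε ^ (1 - u) := Real.rpow_nonneg hε0 _
  have h2 : ε ^ (1 - u) ≤ 1 := Real.rpow_le_one hε0 hε1 (by linarith)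
  unfold updProb
  split_ifs <;> linarith

lemma updProb_le_one {ρ ε u : ℝ} (hε0 : 0 ≤ ε) (hε1 : ε ≤ 1) (hu : u ≤ 1)
    {i : Fin n} (zi zi' : AgentState (A i)) (ai : A i) : updProb ρ ε zi zi' ai u ≤ 1 := by
  have h1 : 0 ≤ ε ^ (1 - u) := Real.rpow_nonneg hε0 _
  have h2 : ε ^ (1 - u) ≤ 1 := Real.rpow_le_one hε0 hε1 (by linarith)
  unfold updProb
  split_ifs <;> linarith

end AuxStatement12


section AuxStatement12b

set_option linter.unusedVariables false
set_option linter.unusedSectionVars false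

variable {n : ℕ} {A : Fin n → Type*} {W : Type*}
variable [∀ i, Fintype (A i)] [∀ i, Nonempty (A i)] [Fintype W] [Nonempty W]
variable (U : ∀ i : Fin n, (∀ j, A j) → W → ℝ) (Prw : W → ℝ) (c : ℝ)

/-! #### Bounds on `P` -/

lemma term_nonneg (hc0 : 0 < c) (hU : ∀ (i : Fin n) (a : ∀ j, A j) (w : W), U i a w ∈ Set.Ico (0:ℝ) 1)
    (hPrw : ∀ w : W, 0 < Prw w) {ε : ℝ} (hε0 : 0 ≤ ε) (hε1 : ε ≤ 1)
    (x y : JState A) (a : ∀ j, A j) (w : W) :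
    0 ≤ (∏ i, actProb c ε (x i) (a i)) * Prw w *
        (∏ i, updProb (rho U) ε (x i) (y i) (a i) (U i a w)) := by
  apply mul_nonneg (mul_nonneg ?_ (hPrw w).le)
  · exact Finset.prod_nonneg fun i _ =>
      updProb_nonneg hε0 hε1 (hU i a w).2.le (x i) (y i) (a i)
  · exact Finset.prod_nonneg fun i _ => actProb_nonneg hc0 hε0 hε1 (x i) (a i)

lemma P_nonneg (hc0 : 0 < c) (hU : ∀ (i : Fin n) (a : ∀ j, A j) (w : W), U i a w ∈ Set.Ico (0:ℝ) 1)
    (hPrw : ∀ w : W, 0 < Prw w) {ε : ℝ} (hε0 : 0 ≤ ε) (hε1 : ε ≤ 1)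
    (x y : JState A) : 0 ≤ P U Prw c ε x y := by
  unfold P
  exact Finset.sum_nonneg fun a _ => Finset.sum_nonneg fun w _ =>
    term_nonneg U Prw c hc0 hU hPrw hε0 hε1 x y a w

lemma term_le_P (hc0 : 0 < c) (hU : ∀ (i : Fin n) (a : ∀ j, A j) (w : W), U i a w ∈ Set.Ico (0:ℝ) 1)
    (hPrw : ∀ w : W, 0 < Prw w) {ε : ℝ} (hε0 : 0 ≤ ε) (hε1 : ε ≤ 1)
    (x y : JState A) (a : ∀ j, A j) (w : W) :
    (∏ i, actProb c ε (x i) (a i)) * Prw w *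
        (∏ i, updProb (rho U) ε (x i) (y i) (a i) (U i a w)) ≤ P U Prw c ε x y := by
  unfold P
  calc (∏ i, actProb c ε (x i) (a i)) * Prw w *
        (∏ i, updProb (rho U) ε (x i) (y i) (a i) (U i a w))
      ≤ ∑ w' : W, (∏ i, actProb c ε (x i) (a i)) * Prw w' *
        (∏ i, updProb (rho U) ε (x i) (y i) (a i) (U i a w')) :=
        Finset.single_le_sum (fun w' _ => term_nonneg U Prw c hc0 hU hPrw hε0 hε1 x y a w')
          (Finset.mem_univ w)
    _ ≤ _ :=
        Finset.single_le_sum (fun a' _ => Finset.sum_nonneg fun w' _ =>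
          term_nonneg U Prw c hc0 hU hPrw hε0 hε1 x y a' w') (Finset.mem_univ a)

lemma P_le_card (hc0 : 0 < c) (hU : ∀ (i : Fin n) (a : ∀ j, A j) (w : W), U i a w ∈ Set.Ico (0:ℝ) 1)
    (hPrw : ∀ w : W, 0 < Prw w) (hPrw1 : (∑ w : W, Prw w) = 1)
    {ε : ℝ} (hε0 : 0 ≤ ε) (hε1 : ε ≤ 1) (x y : JState A) :
    P U Prw c ε x y ≤ (Fintype.card (∀ j, A j) : ℝ) := by
  unfold P
  have key : ∀ (a : ∀ j, A j) (w : W),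
      (∏ i, actProb c ε (x i) (a i)) * Prw w *
        (∏ i, updProb (rho U) ε (x i) (y i) (a i) (U i a w)) ≤ Prw w := by
    intro a w
    have h1 : (∏ i, actProb c ε (x i) (a i)) ≤ 1 :=
      Finset.prod_le_one (fun i _ => actProb_nonneg hc0 hε0 hε1 (x i) (a i))
        (fun i _ => actProb_le_one hc0 hε0 hε1 (x i) (a i))
    have h2 : (∏ i, updProb (rho U) ε (x i) (y i) (a i) (U i a w)) ≤ 1 :=
      Finset.prod_le_one
        (fun i _ => updProb_nonneg hε0 hε1 (hU i a w).2.le (x i) (y i) (a i))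
        (fun i _ => updProb_le_one hε0 hε1 (hU i a w).2.le (x i) (y i) (a i))
    have h1' : 0 ≤ (∏ i, actProb c ε (x i) (a i)) :=
      Finset.prod_nonneg fun i _ => actProb_nonneg hc0 hε0 hε1 (x i) (a i)
    have h2' : 0 ≤ (∏ i, updProb (rho U) ε (x i) (y i) (a i) (U i a w)) :=
      Finset.prod_nonneg fun i _ =>
        updProb_nonneg hε0 hε1 (hU i a w).2.le (x i) (y i) (a i)
    calc (∏ i, actProb c ε (x i) (a i)) * Prw w *
          (∏ i, updProb (rho U) ε (x i) (y i) (a i) (U i a w))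
        ≤ (∏ i, actProb c ε (x i) (a i)) * Prw w * 1 := by
          apply mul_le_mul_of_nonneg_left h2 (mul_nonneg h1' (hPrw w).le)
      _ = (∏ i, actProb c ε (x i) (a i)) * Prw w := by ring
      _ ≤ 1 * Prw w := mul_le_mul_of_nonneg_right h1 (hPrw w).le
      _ = Prw w := one_mul _
  calc (∑ a : ∀ j, A j, ∑ w : W, (∏ i, actProb c ε (x i) (a i)) * Prw w *
        (∏ i, updProb (rho U) ε (x i) (y i) (a i) (U i a w)))
      ≤ ∑ a : ∀ j, A j, ∑ w : W, Prw w :=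
        Finset.sum_le_sum fun a _ => Finset.sum_le_sum fun w _ => key a w
    _ = ∑ a : ∀ j, A j, (1:ℝ) := by rw [Finset.sum_congr rfl fun a _ => hPrw1]
    _ = (Fintype.card (∀ j, A j) : ℝ) := by
        rw [Finset.sum_const, Finset.card_univ, nsmul_eq_mul, mul_one]

/-- From an all-content, `ρ`-aligned state, any transition probability is `O(ε^c)`. -/
lemma P_le_aligned (hc0 : 0 < c)
    (hU : ∀ (i : Fin n) (a : ∀ j, A j) (w : W), U i a w ∈ Set.Ico (0:ℝ) 1)
    (hPrw : ∀ w : W, 0 < Prw w) (hPrw1 : (∑ w : W, Prw w) = 1)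
    (x y : JState A) (hxc : allContent x)
    (hal : ∀ (i : Fin n) (w : W), |U i (prof x) w - (x i).util| ≤ rho U)
    (hxy : y ≠ x) {ε : ℝ} (hε0 : 0 < ε) (hε1 : ε ≤ 1) :
    P U Prw c ε x y ≤ (Fintype.card (∀ j, A j) : ℝ) * ε ^ c := by
  have hεc0 : 0 ≤ ε ^ c := Real.rpow_nonneg hε0.le c
  unfold P
  have key : ∀ (a : ∀ j, A j) (w : W),
      (∏ i, actProb c ε (x i) (a i)) * Prw w *
        (∏ i, updProb (rho U) ε (x i) (y i) (a i) (U i a w)) ≤ Prw w * ε ^ c := by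
    intro a w
    by_cases ha : a = prof x
    · subst ha
      obtain ⟨i0, hi0⟩ := Function.ne_iff.mp hxy
      have hzero : updProb (rho U) ε (x i0) (y i0) (prof x i0) (U i0 (prof x) w) = 0 := by
        rw [updProb_keep (zi := x i0) (zi' := y i0) (ai := prof x i0)
          (u := U i0 (prof x) w) ⟨hxc i0, rfl, hal i0 w⟩, if_neg hi0]
      have : (∏ i, updProb (rho U) ε (x i) (y i) (prof x i) (U i (prof x) w)) = 0 :=
        Finset.prod_eq_zero (Finset.mem_univ i0) hzero
      rw [this, mul_zero]
      exact mul_nonneg (hPrw w).le hεc0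
    · obtain ⟨i0, hi0⟩ := Function.ne_iff.mp ha
      have hi0' : a i0 ≠ (x i0).act := hi0
      have hcard : (2:ℝ) ≤ (Fintype.card (A i0) : ℝ) := by
        have : 1 < Fintype.card (A i0) := Fintype.one_lt_card_iff.mpr ⟨a i0, (x i0).act, hi0'⟩
        exact_mod_cast this
      have h0 : actProb c ε (x i0) (a i0) ≤ ε ^ c := by
        rw [actProb_eq_content c ε (hxc i0), if_neg hi0']
        apply div_le_self hεc0
        linarith
      have hprod : (∏ i, actProb c ε (x i) (a i)) ≤ ε ^ c := by
        calc (∏ i, actProb c ε (x i) (a i))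
            ≤ ∏ i, (if i = i0 then ε ^ c else 1) := by
              apply Finset.prod_le_prod
                (fun i _ => actProb_nonneg hc0 hε0.le hε1 (x i) (a i))
              intro i _
              by_cases h : i = i0
              · subst h; rw [if_pos rfl]; exact h0
              · rw [if_neg h]; exact actProb_le_one hc0 hε0.le hε1 (x i) (a i)
          _ = ε ^ c := by simp
      have h2 : (∏ i, updProb (rho U) ε (x i) (y i) (a i) (U i a w)) ≤ 1 :=
        Finset.prod_le_one
          (fun i _ => updProb_nonneg hε0.le hε1 (hU i a w).2.le (x i) (y i) (a i))
          (fun i _ => updProb_le_one hε0.le hε1 (hU i a w).2.le (x i) (y i) (a i))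
      have h2' : 0 ≤ (∏ i, updProb (rho U) ε (x i) (y i) (a i) (U i a w)) :=
        Finset.prod_nonneg fun i _ =>
          updProb_nonneg hε0.le hε1 (hU i a w).2.le (x i) (y i) (a i)
      have h1' : 0 ≤ (∏ i, actProb c ε (x i) (a i)) :=
        Finset.prod_nonneg fun i _ => actProb_nonneg hc0 hε0.le hε1 (x i) (a i)
      calc (∏ i, actProb c ε (x i) (a i)) * Prw w *
            (∏ i, updProb (rho U) ε (x i) (y i) (a i) (U i a w))
          ≤ (∏ i, actProb c ε (x i) (a i)) * Prw w * 1 :=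
            mul_le_mul_of_nonneg_left h2 (mul_nonneg h1' (hPrw w).le)
        _ = (∏ i, actProb c ε (x i) (a i)) * Prw w := by ring
        _ ≤ ε ^ c * Prw w := mul_le_mul_of_nonneg_right hprod (hPrw w).le
        _ = Prw w * ε ^ c := by ring
  calc (∑ a : ∀ j, A j, ∑ w : W, (∏ i, actProb c ε (x i) (a i)) * Prw w *
        (∏ i, updProb (rho U) ε (x i) (y i) (a i) (U i a w)))
      ≤ ∑ a : ∀ j, A j, ∑ w : W, Prw w * ε ^ c :=
        Finset.sum_le_sum fun a _ => Finset.sum_le_sum fun w _ => key a w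
    _ = ∑ a : ∀ j, A j, ε ^ c := by
        rw [Finset.sum_congr rfl fun (a : ∀ j, A j) _ => by
          rw [← Finset.sum_mul, hPrw1, one_mul]]
    _ = (Fintype.card (∀ j, A j) : ℝ) * ε ^ c := by
        rw [Finset.sum_const, Finset.card_univ, nsmul_eq_mul]

end AuxStatement12b


section AuxStatement12c

set_option linter.unusedVariables false
set_option linter.unusedSectionVars false

/-! #### Asymptotics of one-parameter families as `ε → 0⁺` -/

/-- A function of `ε` that behaves like `L·ε^r` as `ε → 0⁺` (or vanishes near `0⁺`). -/
def NiceF (f : ℝ → ℝ) : Prop :=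
  (∀ᶠ ε in 𝓝[>] (0:ℝ), f ε = 0) ∨
    ∃ r L : ℝ, 0 < L ∧ Filter.Tendsto (fun ε => f ε / ε ^ r) (𝓝[>] (0:ℝ)) (𝓝 L)

lemma tendsto_rpow_zero {γ : ℝ} (hγ : 0 < γ) :
    Filter.Tendsto (fun ε : ℝ => ε ^ γ) (𝓝[>] (0:ℝ)) (𝓝 0) := by
  have h := (Real.continuousAt_rpow_const 0 γ (Or.inr hγ.le)).tendsto
  rw [Real.zero_rpow hγ.ne'] at h
  exact h.mono_left nhdsWithin_le_nhds

lemma evIoo : ∀ᶠ ε in 𝓝[>] (0:ℝ), ε ∈ Set.Ioo (0:ℝ) 1 := by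
  have h : Set.Ioo (0:ℝ) 1 ∈ 𝓝[>] (0:ℝ) :=
    Ioo_mem_nhdsGT_of_mem (by norm_num : (0:ℝ) ∈ Set.Ico (0:ℝ) 1)
  exact Filter.eventually_iff.mpr h

lemma evPos : ∀ᶠ ε in 𝓝[>] (0:ℝ), (0:ℝ) < ε :=
  evIoo.mono fun ε h => h.1

lemma nice_zero : NiceF (fun _ => 0) := Or.inl (Filter.Eventually.of_forall fun _ => rfl)

lemma nice_const (k : ℝ) (hk : 0 ≤ k) : NiceF (fun _ => k) := by
  rcases eq_or_lt_of_le hk with h | h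
  · exact Or.inl (Filter.Eventually.of_forall fun _ => h.symm)
  · refine Or.inr ⟨0, k, h, ?_⟩
    simpa [Real.rpow_zero] using (tendsto_const_nhds : Filter.Tendsto (fun _ : ℝ => k) _ (𝓝 k))

lemma nice_one : NiceF (fun _ => 1) := nice_const 1 one_pos.le

lemma nice_rpow (γ : ℝ) : NiceF (fun ε : ℝ => ε ^ γ) := by
  refine Or.inr ⟨γ, 1, one_pos, ?_⟩
  apply Filter.Tendsto.congr' _ (tendsto_const_nhds : Filter.Tendsto (fun _ : ℝ => (1:ℝ)) _ _)
  filter_upwards [evPos] with ε hε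
  rw [div_self (Real.rpow_pos_of_pos hε γ).ne']

lemma nice_one_sub_rpow {γ : ℝ} (hγ : 0 < γ) : NiceF (fun ε : ℝ => 1 - ε ^ γ) := by
  refine Or.inr ⟨0, 1, one_pos, ?_⟩
  have h : Filter.Tendsto (fun ε : ℝ => 1 - ε ^ γ) (𝓝[>] (0:ℝ)) (𝓝 1) := by
    have := (tendsto_const_nhds (x := (1:ℝ)) (f := 𝓝[>] (0:ℝ))).sub (tendsto_rpow_zero hγ)
    simpa using this
  simpa [Real.rpow_zero] using h

lemma nice_mul {f g : ℝ → ℝ} (hf : NiceF f) (hg : NiceF g) : NiceF (fun ε => f ε * g ε) := by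
  rcases hf with hf | ⟨r, L, hL, hf⟩
  · exact Or.inl (hf.mono fun ε h => by simp only [h, zero_mul])
  rcases hg with hg | ⟨s, M, hM, hg⟩
  · exact Or.inl (hg.mono fun ε h => by simp only [h, mul_zero])
  refine Or.inr ⟨r + s, L * M, mul_pos hL hM, ?_⟩
  apply Filter.Tendsto.congr' _ (hf.mul hg)
  filter_upwards [evPos] with ε hε
  rw [Real.rpow_add hε, div_mul_div_comm]

lemma nice_add {f g : ℝ → ℝ} (hf : NiceF f) (hg : NiceF g) : NiceF (fun ε => f ε + g ε) := by
  rcases hf with hf | ⟨r, L, hL, hf⟩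
  · rcases hg with hg | ⟨s, M, hM, hg⟩
    · exact Or.inl ((hf.and hg).mono fun ε h => by simp only [h.1, h.2, add_zero])
    · refine Or.inr ⟨s, M, hM, ?_⟩
      apply Filter.Tendsto.congr' _ hg
      filter_upwards [hf] with ε h
      simp only [h, zero_add]
  rcases hg with hg | ⟨s, M, hM, hg⟩
  · refine Or.inr ⟨r, L, hL, ?_⟩
    apply Filter.Tendsto.congr' _ hf
    filter_upwards [hg] with ε h
    simp only [h, add_zero]
  rcases lt_trichotomy r s with hrs | hrs | hrs
  · refine Or.inr ⟨r, L, hL, ?_⟩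
    have h2 : Filter.Tendsto (fun ε : ℝ => g ε / ε ^ s * ε ^ (s - r)) (𝓝[>] (0:ℝ))
        (𝓝 (M * 0)) := hg.mul (tendsto_rpow_zero (by linarith))
    rw [mul_zero] at h2
    have h3 := hf.add h2
    rw [add_zero] at h3
    apply Filter.Tendsto.congr' _ h3
    filter_upwards [evPos] with ε hε
    have hεr : ε ^ r ≠ 0 := (Real.rpow_pos_of_pos hε r).ne'
    have hεs : ε ^ s ≠ 0 := (Real.rpow_pos_of_pos hε s).ne'
    rw [Real.rpow_sub hε]
    field_simp
    try ring
  · subst hrs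
    refine Or.inr ⟨r, L + M, by linarith, ?_⟩
    apply Filter.Tendsto.congr' _ (hf.add hg)
    filter_upwards with ε
    rw [← add_div]
  · refine Or.inr ⟨s, M, hM, ?_⟩
    have h2 : Filter.Tendsto (fun ε : ℝ => f ε / ε ^ r * ε ^ (r - s)) (𝓝[>] (0:ℝ))
        (𝓝 (L * 0)) := hf.mul (tendsto_rpow_zero (by linarith))
    rw [mul_zero] at h2
    have h3 := h2.add hg
    rw [zero_add] at h3
    apply Filter.Tendsto.congr' _ h3
    filter_upwards [evPos] with ε hε
    have hεr : ε ^ r ≠ 0 := (Real.rpow_pos_of_pos hε r).ne'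
    have hεs : ε ^ s ≠ 0 := (Real.rpow_pos_of_pos hε s).ne'
    rw [Real.rpow_sub hε]
    field_simp
    try ring

lemma nice_sum {ι : Type*} (s : Finset ι) (f : ι → ℝ → ℝ) (h : ∀ i ∈ s, NiceF (f i)) :
    NiceF (fun ε => ∑ i ∈ s, f i ε) := by
  classical
  induction s using Finset.induction_on with
  | empty => simpa using nice_zero
  | @insert a s ha ih =>
    have := nice_add (h a (Finset.mem_insert_self a s))
      (ih fun i hi => h i (Finset.mem_insert_of_mem hi))
    simpa [Finset.sum_insert ha] using this

lemma nice_prod {ι : Type*} (s : Finset ι) (f : ι → ℝ → ℝ) (h : ∀ i ∈ s, NiceF (f i)) :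
    NiceF (fun ε => ∏ i ∈ s, f i ε) := by
  classical
  induction s using Finset.induction_on with
  | empty => simpa using nice_one
  | @insert a s ha ih =>
    have := nice_mul (h a (Finset.mem_insert_self a s))
      (ih fun i hi => h i (Finset.mem_insert_of_mem hi))
    simpa [Finset.prod_insert ha] using this

lemma rpow_fsum {x : ℝ} (hx : 0 < x) {ι : Type*} (s : Finset ι) (f : ι → ℝ) :
    x ^ (∑ i ∈ s, f i) = ∏ i ∈ s, x ^ f i := by
  classical
  induction s using Finset.induction_on with
  | empty => simp [Real.rpow_zero]
  | @insert a s ha ih =>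
    rw [Finset.sum_insert ha, Finset.prod_insert ha, Real.rpow_add hx, ih]

end AuxStatement12c


section AuxStatement12d

set_option linter.unusedVariables false
set_option linter.unusedSectionVars false

variable {n : ℕ} {A : Fin n → Type*} {W : Type*}
variable [∀ i, Fintype (A i)] [∀ i, Nonempty (A i)] [Fintype W] [Nonempty W]
variable (U : ∀ i : Fin n, (∀ j, A j) → W → ℝ) (Prw : W → ℝ) (c : ℝ)

lemma nice_actProb (hc0 : 0 < c) {i : Fin n} (zi : AgentState (A i)) (ai : A i) :
    NiceF (fun ε => actProb c ε zi ai) := by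
  rcases mood_eq_or zi.mood with h | h
  · by_cases hai : ai = zi.act
    · have : (fun ε => actProb c ε zi ai) = fun ε : ℝ => 1 - ε ^ c := by
        funext ε; rw [actProb_eq_content c ε h, if_pos hai]
      rw [this]; exact nice_one_sub_rpow hc0
    · have : (fun ε => actProb c ε zi ai)
          = fun ε : ℝ => ε ^ c * ((Fintype.card (A i) : ℝ) - 1)⁻¹ := by
        funext ε
        rw [actProb_eq_content c ε h, if_neg hai, div_eq_mul_inv]
      rw [this]
      apply nice_mul (nice_rpow c)
      apply nice_const
      rcases Nat.lt_or_ge (Fintype.card (A i)) 2 with h2 | h2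
      · have h1 : Fintype.card (A i) = 1 := by
          have : 0 < Fintype.card (A i) := Fintype.card_pos
          omega
        rw [h1]; norm_num
      · have h3 : (2:ℝ) ≤ (Fintype.card (A i) : ℝ) := by exact_mod_cast h2
        have h4 : (0:ℝ) < (Fintype.card (A i) : ℝ) - 1 := by linarith
        positivity
  · have : (fun ε => actProb c ε zi ai) = fun _ : ℝ => 1 / (Fintype.card (A i) : ℝ) := by
      funext ε; rw [actProb_eq_discontent c ε h]
    rw [this]
    exact nice_const _ (by positivity)

lemma nice_updProb (ρ : ℝ) {i : Fin n} (zi zi' : AgentState (A i)) (ai : A i) {u : ℝ}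
    (hu : u < 1) : NiceF (fun ε => updProb ρ ε zi zi' ai u) := by
  by_cases h1 : zi.mood = Mood.content ∧ ai = zi.act ∧ |u - zi.util| ≤ ρ
  · have : (fun ε => updProb ρ ε zi zi' ai u)
        = fun _ : ℝ => if zi' = zi then 1 else 0 := by
      funext ε; rw [updProb_keep h1]
    rw [this]
    split_ifs
    · exact nice_one
    · exact nice_zero
  · by_cases h2 : zi' = ⟨ai, u, Mood.content⟩
    · have : (fun ε => updProb ρ ε zi zi' ai u) = fun ε : ℝ => ε ^ (1 - u) := by
        funext ε; rw [updProb_acc h1 h2]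
      rw [this]; exact nice_rpow _
    · by_cases h3 : zi' = ⟨ai, u, Mood.discontent⟩
      · have : (fun ε => updProb ρ ε zi zi' ai u) = fun ε : ℝ => 1 - ε ^ (1 - u) := by
          funext ε; rw [updProb_rej h1 h3]
        rw [this]; exact nice_one_sub_rpow (by linarith)
      · have : (fun ε => updProb ρ ε zi zi' ai u) = fun _ : ℝ => 0 := by
          funext ε; unfold updProb; rw [if_neg h1, if_neg h2, if_neg h3]
        rw [this]; exact nice_zero

lemma nice_P (hc0 : 0 < c)
    (hU : ∀ (i : Fin n) (a : ∀ j, A j) (w : W), U i a w ∈ Set.Ico (0:ℝ) 1)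
    (hPrw : ∀ w : W, 0 < Prw w) (x y : JState A) :
    NiceF (fun ε => P U Prw c ε x y) := by
  unfold P
  apply nice_sum
  intro a _
  apply nice_sum
  intro w _
  apply nice_mul
  · apply nice_mul
    · exact nice_prod _ _ fun i _ => nice_actProb c hc0 (x i) (a i)
    · exact nice_const _ (hPrw w).le
  · exact nice_prod _ _ fun i _ => nice_updProb (rho U) (x i) (y i) (a i) (hU i a w).2

/-- If `P x y ≤ K ε^a` near `0⁺` then any resistance of `x → y` is at least `a`. -/
lemma transres_ge (x y : JState A) {K aa r L : ℝ}
    (hub : ∀ᶠ ε in 𝓝[>] (0:ℝ), P U Prw c ε x y ≤ K * ε ^ aa)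
    (hnn : ∀ᶠ ε in 𝓝[>] (0:ℝ), 0 ≤ P U Prw c ε x y)
    (hL : 0 < L)
    (hT : Filter.Tendsto (fun ε => P U Prw c ε x y / ε ^ r) (𝓝[>] (0:ℝ)) (𝓝 L)) :
    aa ≤ r := by
  by_contra hlt
  push_neg at hlt
  have h0 : Filter.Tendsto (fun ε => P U Prw c ε x y / ε ^ r) (𝓝[>] (0:ℝ)) (𝓝 0) := by
    have hK0 : Filter.Tendsto (fun ε : ℝ => K * ε ^ (aa - r)) (𝓝[>] (0:ℝ)) (𝓝 0) := by
      have := (tendsto_rpow_zero (by linarith : 0 < aa - r)).const_mul K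
      simpa using this
    apply tendsto_of_tendsto_of_tendsto_of_le_of_le' tendsto_const_nhds hK0
    · filter_upwards [hnn, evPos] with ε h1 h2
      exact div_nonneg h1 (Real.rpow_nonneg h2.le r)
    · filter_upwards [hub, evPos] with ε h1 h2
      have hεr : (0:ℝ) < ε ^ r := Real.rpow_pos_of_pos h2 r
      rw [div_le_iff₀ hεr]
      calc P U Prw c ε x y ≤ K * ε ^ aa := h1
        _ = K * ε ^ (aa - r) * ε ^ r := by
            rw [mul_assoc, ← Real.rpow_add h2]; ring_nf
  have := tendsto_nhds_unique hT h0
  linarith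

/-- If `c₀ ε^b ≤ P x y` near `0⁺` then any resistance of `x → y` is at most `b`. -/
lemma transres_le (x y : JState A) {c₀ b r L : ℝ} (hc₀ : 0 < c₀)
    (hlb : ∀ᶠ ε in 𝓝[>] (0:ℝ), c₀ * ε ^ b ≤ P U Prw c ε x y)
    (hL : 0 < L)
    (hT : Filter.Tendsto (fun ε => P U Prw c ε x y / ε ^ r) (𝓝[>] (0:ℝ)) (𝓝 L)) :
    r ≤ b := by
  by_contra hlt
  push_neg at hlt
  have h0 : Filter.Tendsto (fun ε => P U Prw c ε x y / ε ^ b) (𝓝[>] (0:ℝ)) (𝓝 0) := by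
    have h2 := hT.mul (tendsto_rpow_zero (by linarith : 0 < r - b))
    rw [mul_zero] at h2
    apply Filter.Tendsto.congr' _ h2
    filter_upwards [evPos] with ε hε
    have hεr : ε ^ r ≠ 0 := (Real.rpow_pos_of_pos hε r).ne'
    have hεb : ε ^ b ≠ 0 := (Real.rpow_pos_of_pos hε b).ne'
    rw [Real.rpow_sub hε]
    field_simp
  have hge : c₀ ≤ (0:ℝ) := by
    apply ge_of_tendsto h0
    filter_upwards [hlb, evPos] with ε h1 h2
    have hεb : (0:ℝ) < ε ^ b := Real.rpow_pos_of_pos h2 b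
    rw [le_div_iff₀ hεb]
    linarith [h1]
  linarith

/-- Existence of a resistance, with an upper bound, given an explicit lower bound on `P`. -/
lemma exists_transRes (hc0 : 0 < c)
    (hU : ∀ (i : Fin n) (a : ∀ j, A j) (w : W), U i a w ∈ Set.Ico (0:ℝ) 1)
    (hPrw : ∀ w : W, 0 < Prw w) (hPrw1 : (∑ w : W, Prw w) = 1)
    (x y : JState A) {b c₀ : ℝ} (hc₀ : 0 < c₀)
    (hev : ∀ᶠ ε in 𝓝[>] (0:ℝ), c₀ * ε ^ b ≤ P U Prw c ε x y) :
    ∃ r : ℝ, 0 ≤ r ∧ r ≤ b ∧ TransRes U Prw c x y r := by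
  rcases nice_P U Prw c hc0 hU hPrw x y with h0 | ⟨r, L, hL, hT⟩
  · exfalso
    obtain ⟨ε, ⟨h1, h2⟩, h3⟩ := ((hev.and h0).and evPos).exists
    have hpos : (0:ℝ) < c₀ * ε ^ b := mul_pos hc₀ (Real.rpow_pos_of_pos h3 b)
    rw [show P U Prw c ε x y = 0 from h2] at h1
    linarith
  · refine ⟨r, ?_, ?_, ⟨L, hL, hT⟩⟩
    · apply transres_ge U Prw c x y (K := (Fintype.card (∀ j, A j) : ℝ)) (aa := 0)
        ?_ ?_ hL hT
      · filter_upwards [evIoo] with ε hε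
        rw [Real.rpow_zero, mul_one]
        exact P_le_card U Prw c hc0 hU hPrw hPrw1 hε.1.le hε.2.le x y
      · filter_upwards [evIoo] with ε hε
        exact P_nonneg U Prw c hc0 hU hPrw hε.1.le hε.2.le x y
    · exact transres_le U Prw c x y hc₀ hev hL hT

/-- Any resistance is nonnegative. -/
lemma transres_nonneg (hc0 : 0 < c)
    (hU : ∀ (i : Fin n) (a : ∀ j, A j) (w : W), U i a w ∈ Set.Ico (0:ℝ) 1)
    (hPrw : ∀ w : W, 0 < Prw w) (hPrw1 : (∑ w : W, Prw w) = 1)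
    {x y : JState A} {r : ℝ} (h : TransRes U Prw c x y r) : 0 ≤ r := by
  obtain ⟨L, hL, hT⟩ := h
  apply transres_ge U Prw c x y (K := (Fintype.card (∀ j, A j) : ℝ)) (aa := 0)
      ?_ ?_ hL hT
  · filter_upwards [evIoo] with ε hε
    rw [Real.rpow_zero, mul_one]
    exact P_le_card U Prw c hc0 hU hPrw hPrw1 hε.1.le hε.2.le x y
  · filter_upwards [evIoo] with ε hε
    exact P_nonneg U Prw c hc0 hU hPrw hε.1.le hε.2.le x y

/-- From an all-content `ρ`-aligned state, every outgoing resistance is at least `c`. -/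
lemma transres_aligned_ge (hc0 : 0 < c)
    (hU : ∀ (i : Fin n) (a : ∀ j, A j) (w : W), U i a w ∈ Set.Ico (0:ℝ) 1)
    (hPrw : ∀ w : W, 0 < Prw w) (hPrw1 : (∑ w : W, Prw w) = 1)
    {x y : JState A} (hxc : allContent x)
    (hal : ∀ (i : Fin n) (w : W), |U i (prof x) w - (x i).util| ≤ rho U)
    (hxy : y ≠ x) {r : ℝ} (h : TransRes U Prw c x y r) : c ≤ r := by
  obtain ⟨L, hL, hT⟩ := h
  apply transres_ge U Prw c x y (K := (Fintype.card (∀ j, A j) : ℝ)) (aa := c)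
      ?_ ?_ hL hT
  · filter_upwards [evIoo] with ε hε
    exact P_le_aligned U Prw c hc0 hU hPrw hPrw1 x y hxc hal hxy hε.1 hε.2.le
  · filter_upwards [evIoo] with ε hε
    exact P_nonneg U Prw c hc0 hU hPrw hε.1.le hε.2.le x y

end AuxStatement12d


section AuxStatement12e

set_option linter.unusedVariables false
set_option linter.unusedSectionVars false

variable {n : ℕ} {A : Fin n → Type*} {W : Type*}
variable [∀ i, Fintype (A i)] [∀ i, Nonempty (A i)] [Fintype W] [Nonempty W]
variable (U : ∀ i : Fin n, (∀ j, A j) → W → ℝ) (Prw : W → ℝ) (c : ℝ)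

/-- The "keep" condition for agent `i` in state `x` when the profile `a` is played and
the disturbance is `w`. -/
def keepc (x : JState A) (a : ∀ j, A j) (w : W) (i : Fin n) : Prop :=
  (x i).mood = Mood.content ∧ a i = (x i).act ∧ |U i a w - (x i).util| ≤ rho U

/-- Per-agent resistance contribution of a designed transition. -/
noncomputable def bexp (x y : JState A) (a : ∀ j, A j) (w : W) (i : Fin n) : ℝ :=
  (if (x i).mood = Mood.content ∧ a i ≠ (x i).act then c else 0) +
    (if ¬ keepc U x a w i ∧ y i = ⟨a i, U i a w, Mood.content⟩ then 1 - U i a w else 0)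

/-- Lower bound on the action factor of agent `i`. -/
lemma act_lb (hc0 : 0 < c) (x : JState A) (a : ∀ j, A j) (i : Fin n) :
    ∃ d : ℝ, 0 < d ∧ ∀ᶠ ε in 𝓝[>] (0:ℝ),
      d * ε ^ (if (x i).mood = Mood.content ∧ a i ≠ (x i).act then c else 0)
        ≤ actProb c ε (x i) (a i) := by
  rcases mood_eq_or (x i).mood with hm | hm
  · by_cases ha : a i = (x i).act
    · refine ⟨1/2, by norm_num, ?_⟩
      have hev := (tendsto_rpow_zero hc0).eventually_lt_const (by norm_num : (0:ℝ) < 1/2)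
      filter_upwards [hev] with ε hε
      rw [if_neg (by simp [ha]), Real.rpow_zero, mul_one,
        actProb_eq_content c ε hm, if_pos ha]
      linarith
    · have hcard : (2:ℝ) ≤ (Fintype.card (A i) : ℝ) := by
        have : 1 < Fintype.card (A i) := Fintype.one_lt_card_iff.mpr ⟨a i, (x i).act, ha⟩
        exact_mod_cast this
      refine ⟨((Fintype.card (A i) : ℝ) - 1)⁻¹, inv_pos.mpr (by linarith), ?_⟩
      filter_upwards with ε
      rw [if_pos ⟨hm, ha⟩, actProb_eq_content c ε hm, if_neg ha, div_eq_mul_inv, mul_comm]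
  · refine ⟨1 / (Fintype.card (A i) : ℝ), by
      have := card_real_pos (A := A) i; positivity, ?_⟩
    filter_upwards with ε
    rw [if_neg (by simp [hm]), Real.rpow_zero, mul_one, actProb_eq_discontent c ε hm]

/-- Lower bound on the update factor of agent `i` for a designed transition. -/
lemma upd_lb (hU : ∀ (i : Fin n) (a : ∀ j, A j) (w : W), U i a w ∈ Set.Ico (0:ℝ) 1)
    (x y : JState A) (a : ∀ j, A j) (w : W) (i : Fin n)
    (hkeep : keepc U x a w i → y i = x i)
    (hnk : ¬ keepc U x a w i →
      y i = ⟨a i, U i a w, Mood.content⟩ ∨ y i = ⟨a i, U i a w, Mood.discontent⟩) :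
    ∃ d : ℝ, 0 < d ∧ ∀ᶠ ε in 𝓝[>] (0:ℝ),
      d * ε ^ (if ¬ keepc U x a w i ∧ y i = ⟨a i, U i a w, Mood.content⟩
          then 1 - U i a w else 0)
        ≤ updProb (rho U) ε (x i) (y i) (a i) (U i a w) := by
  by_cases hK : keepc U x a w i
  · refine ⟨1, one_pos, ?_⟩
    filter_upwards with ε
    rw [if_neg (fun h => h.1 hK), Real.rpow_zero, mul_one,
      updProb_keep hK, if_pos (hkeep hK)]
  · rcases hnk hK with hy | hy
    · refine ⟨1, one_pos, ?_⟩
      filter_upwards with ε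
      rw [if_pos ⟨hK, hy⟩, one_mul, updProb_acc hK hy]
    · have hne : y i ≠ ⟨a i, U i a w, Mood.content⟩ := by rw [hy]; simp
      refine ⟨1/2, by norm_num, ?_⟩
      have h1u : 0 < 1 - U i a w := by have := (hU i a w).2; linarith
      have hev := (tendsto_rpow_zero h1u).eventually_lt_const (by norm_num : (0:ℝ) < 1/2)
      filter_upwards [hev] with ε hε
      rw [if_neg (fun h => hne h.2), Real.rpow_zero, mul_one, updProb_rej hK hy]
      linarith

/-- **Master lemma**: a designed transition has probability at least `c₀ ε^{∑ bexp}`. -/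
lemma master (hc0 : 0 < c)
    (hU : ∀ (i : Fin n) (a : ∀ j, A j) (w : W), U i a w ∈ Set.Ico (0:ℝ) 1)
    (hPrw : ∀ w : W, 0 < Prw w)
    (x y : JState A) (a : ∀ j, A j) (w : W)
    (hcase : ∀ i, (keepc U x a w i → y i = x i) ∧
      (¬ keepc U x a w i →
        y i = ⟨a i, U i a w, Mood.content⟩ ∨ y i = ⟨a i, U i a w, Mood.discontent⟩)) :
    ∃ c₀ : ℝ, 0 < c₀ ∧ ∀ᶠ ε in 𝓝[>] (0:ℝ),
      c₀ * ε ^ (∑ i, bexp U c x y a w i) ≤ P U Prw c ε x y := by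
  choose dA hdA hevA using fun i => act_lb c hc0 x a i
  choose dU hdU hevU using fun i =>
    upd_lb U hU x y a w i (hcase i).1 (hcase i).2
  refine ⟨Prw w * ((∏ i, dA i) * (∏ i, dU i)), ?_, ?_⟩
  · have h1 : (0:ℝ) < ∏ i, dA i := Finset.prod_pos fun i _ => hdA i
    have h2 : (0:ℝ) < ∏ i, dU i := Finset.prod_pos fun i _ => hdU i
    have := hPrw w
    positivity
  · filter_upwards [Filter.eventually_all.mpr hevA, Filter.eventually_all.mpr hevU, evIoo]
      with ε hA hUP hε
    set bA : Fin n → ℝ :=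
      fun i => if (x i).mood = Mood.content ∧ a i ≠ (x i).act then c else 0 with hbA
    set bU : Fin n → ℝ :=
      fun i => if ¬ keepc U x a w i ∧ y i = ⟨a i, U i a w, Mood.content⟩
        then 1 - U i a w else 0 with hbU
    have hsum : (∑ i, bexp U c x y a w i) = (∑ i, bA i) + (∑ i, bU i) := by
      rw [← Finset.sum_add_distrib]
      exact Finset.sum_congr rfl fun i _ => rfl
    have hprod : ε ^ (∑ i, bexp U c x y a w i)
        = (∏ i, ε ^ bA i) * (∏ i, ε ^ bU i) := by
      rw [hsum, Real.rpow_add hε.1, rpow_fsum hε.1, rpow_fsum hε.1]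
    have hle : (∏ i, dA i * ε ^ bA i) * (∏ i, dU i * ε ^ bU i)
        ≤ (∏ i, actProb c ε (x i) (a i)) *
          (∏ i, updProb (rho U) ε (x i) (y i) (a i) (U i a w)) := by
      apply mul_le_mul
      · exact Finset.prod_le_prod
          (fun i _ => mul_nonneg (hdA i).le (Real.rpow_nonneg hε.1.le _))
          (fun i _ => hA i)
      · exact Finset.prod_le_prod
          (fun i _ => mul_nonneg (hdU i).le (Real.rpow_nonneg hε.1.le _))
          (fun i _ => hUP i)
      · exact Finset.prod_nonneg
          (fun i _ => mul_nonneg (hdU i).le (Real.rpow_nonneg hε.1.le _))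
      · exact Finset.prod_nonneg
          (fun i _ => actProb_nonneg hc0 hε.1.le hε.2.le (x i) (a i))
    have hfact1 : (∏ i, dA i * ε ^ bA i) = (∏ i, dA i) * (∏ i, ε ^ bA i) :=
      Finset.prod_mul_distrib
    have hfact2 : (∏ i, dU i * ε ^ bU i) = (∏ i, dU i) * (∏ i, ε ^ bU i) :=
      Finset.prod_mul_distrib
    calc Prw w * ((∏ i, dA i) * (∏ i, dU i)) * ε ^ (∑ i, bexp U c x y a w i)
        = ((∏ i, dA i) * (∏ i, ε ^ bA i)) * ((∏ i, dU i) * (∏ i, ε ^ bU i)) * Prw w := by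
          rw [hprod]; ring
      _ = (∏ i, dA i * ε ^ bA i) * (∏ i, dU i * ε ^ bU i) * Prw w := by
          rw [hfact1, hfact2]
      _ ≤ (∏ i, actProb c ε (x i) (a i)) *
            (∏ i, updProb (rho U) ε (x i) (y i) (a i) (U i a w)) * Prw w :=
          mul_le_mul_of_nonneg_right hle (hPrw w).le
      _ = (∏ i, actProb c ε (x i) (a i)) * Prw w *
            (∏ i, updProb (rho U) ε (x i) (y i) (a i) (U i a w)) := by ring
      _ ≤ P U Prw c ε x y :=
          term_le_P U Prw c hc0 hU hPrw hε.1.le hε.2.le x y a w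

end AuxStatement12e


section AuxStatement12f

set_option linter.unusedVariables false
set_option linter.unusedSectionVars false

variable {n : ℕ} {A : Fin n → Type*} {W : Type*}
variable [∀ i, Fintype (A i)] [∀ i, Nonempty (A i)] [Fintype W] [Nonempty W]
variable (U : ∀ i : Fin n, (∀ j, A j) → W → ℝ) (Prw : W → ℝ) (c : ℝ)

/-- Reflexive-or-path reachability with resistance `r`. -/
def PR0 (x y : JState A) (r : ℝ) : Prop :=
  (y = x ∧ r = 0) ∨ PathRes (TransRes U Prw c) x y r

lemma pathres_trans {X : Type*} {R : X → X → ℝ → Prop} :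
    ∀ {x y r}, PathRes R x y r → ∀ {z s}, PathRes R y z s → PathRes R x z (r + s) := by
  intro x y r h1
  induction h1 with
  | single h => intro z s h2; exact PathRes.cons h h2
  | cons h p ih =>
    intro z s h2
    rw [add_assoc]
    exact PathRes.cons h (ih h2)

lemma pr0_trans {x y z : JState A} {r s : ℝ} (h1 : PR0 U Prw c x y r)
    (h2 : PR0 U Prw c y z s) : PR0 U Prw c x z (r + s) := by
  rcases h1 with ⟨hy, hr⟩ | p1
  · rcases h2 with ⟨hz, hs⟩ | p2
    · exact Or.inl ⟨hz.trans hy, by rw [hr, hs, add_zero]⟩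
    · subst hy
      rw [hr, zero_add]
      exact Or.inr p2
  · rcases h2 with ⟨hz, hs⟩ | p2
    · subst hz
      rw [hs, add_zero]
      exact Or.inr p1
    · exact Or.inr (pathres_trans p1 p2)

lemma pathres_cons_pr0 {x y z : JState A} {r s : ℝ} (h : TransRes U Prw c x y r)
    (p : PR0 U Prw c y z s) : PathRes (TransRes U Prw c) x z (r + s) := by
  rcases p with ⟨hz, hs⟩ | p
  · subst hz
    rw [hs, add_zero]
    exact PathRes.single h
  · exact PathRes.cons h p

lemma pathres_nonneg (hc0 : 0 < c)
    (hU : ∀ (i : Fin n) (a : ∀ j, A j) (w : W), U i a w ∈ Set.Ico (0:ℝ) 1)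
    (hPrw : ∀ w : W, 0 < Prw w) (hPrw1 : (∑ w : W, Prw w) = 1) :
    ∀ {x y : JState A} {r : ℝ}, PathRes (TransRes U Prw c) x y r → 0 ≤ r := by
  intro x y r h
  induction h with
  | single h => exact transres_nonneg U Prw c hc0 hU hPrw hPrw1 h
  | cons h p ih =>
    have := transres_nonneg U Prw c hc0 hU hPrw hPrw1 h
    linarith

lemma path_lower (hc0 : 0 < c)
    (hU : ∀ (i : Fin n) (a : ∀ j, A j) (w : W), U i a w ∈ Set.Ico (0:ℝ) 1)
    (hPrw : ∀ w : W, 0 < Prw w) (hPrw1 : (∑ w : W, Prw w) = 1)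
    (x0 : JState A) (hxc : allContent x0)
    (hal : ∀ (i : Fin n) (w : W), |U i (prof x0) w - (x0 i).util| ≤ rho U) :
    ∀ {x y : JState A} {r : ℝ}, PathRes (TransRes U Prw c) x y r → x = x0 → y ≠ x0 → c ≤ r := by
  intro x y r h
  induction h with
  | single h =>
    intro hx hy
    rw [hx] at h
    exact transres_aligned_ge U Prw c hc0 hU hPrw hPrw1 hxc hal hy h
  | @cons x1 y1 z1 r1 s1 h p ih =>
    intro hx hz
    rw [hx] at h
    by_cases hy : y1 = x0
    · have h1 := ih hy hz
      have h2 := transres_nonneg U Prw c hc0 hU hPrw hPrw1 h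
      linarith
    · have h1 := transres_aligned_ge U Prw c hc0 hU hPrw hPrw1 hxc hal hy h
      have h2 := pathres_nonneg U Prw c hc0 hU hPrw hPrw1 p
      linarith

/-- The simultaneous-experimentation transition out of an all-content state. -/
lemma trans_experiment (hc0 : 0 < c)
    (hU : ∀ (i : Fin n) (a : ∀ j, A j) (w : W), U i a w ∈ Set.Ico (0:ℝ) 1)
    (hPrw : ∀ w : W, 0 < Prw w) (hPrw1 : (∑ w : W, Prw w) = 1)
    (x : JState A) (hxc : allContent x) (b : ∀ j, A j) (hb : ∀ i, b i ≠ (x i).act)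
    (w₀ : W) :
    ∃ r : ℝ, 0 ≤ r ∧ r ≤ (n : ℝ) * c ∧
      TransRes U Prw c x (fun i => ⟨b i, U i b w₀, Mood.discontent⟩) r := by
  set y : JState A := fun i => ⟨b i, U i b w₀, Mood.discontent⟩ with hy
  have hcase : ∀ i, (keepc U x b w₀ i → y i = x i) ∧
      (¬ keepc U x b w₀ i →
        y i = ⟨b i, U i b w₀, Mood.content⟩ ∨ y i = ⟨b i, U i b w₀, Mood.discontent⟩) := by
    intro i
    constructor
    · intro hK
      exact absurd hK.2.1 (hb i)
    · intro _
      exact Or.inr rfl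
  obtain ⟨c₀, hc₀, hev⟩ := master U Prw c hc0 hU hPrw x y b w₀ hcase
  have hsum : (∑ i, bexp U c x y b w₀ i) = (n : ℝ) * c := by
    have hone : ∀ i : Fin n, bexp U c x y b w₀ i = c := by
      intro i
      unfold bexp
      rw [if_pos ⟨hxc i, hb i⟩, if_neg (fun h => by
        have h2 := h.2
        have : y i = (⟨b i, U i b w₀, Mood.discontent⟩ : AgentState (A i)) := rfl
        rw [this] at h2
        simp at h2), add_zero]
    rw [Finset.sum_congr rfl fun i _ => hone i, Finset.sum_const, Finset.card_univ,
      Fintype.card_fin, nsmul_eq_mul]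
  rw [hsum] at hev
  exact exists_transRes U Prw c hc0 hU hPrw hPrw1 x y hc₀ hev

/-- One acceptance step of the rebuilding phase. -/
lemma trans_finstep (hc0 : 0 < c)
    (hU : ∀ (i : Fin n) (a : ∀ j, A j) (w : W), U i a w ∈ Set.Ico (0:ℝ) 1)
    (hPrw : ∀ w : W, 0 < Prw w) (hPrw1 : (∑ w : W, Prw w) = 1)
    (z x : JState A) (G : Finset (Fin n)) (j : Fin n) (hjG : j ∉ G) (wj : W)
    (hG : ∀ i ∈ G, (z i).mood = Mood.content ∧
      (∀ w : W, |U i (prof z) w - (z i).util| ≤ rho U) ∧ x i = z i)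
    (hd : ∀ i ∉ G, (x i).mood = Mood.discontent)
    (hjc : (z j).mood = Mood.content) (hwj : (z j).util = U j (prof z) wj) :
    ∃ r : ℝ, 0 ≤ r ∧ r ≤ 1 - U j (prof z) wj ∧
      TransRes U Prw c x
        (fun i => if i ∈ insert j G then z i
          else ⟨prof z i, U i (prof z) wj, Mood.discontent⟩) r := by
  set y : JState A := fun i => if i ∈ insert j G then z i
    else ⟨prof z i, U i (prof z) wj, Mood.discontent⟩ with hy
  have hKi : ∀ i ∈ G, keepc U x (prof z) wj i := by
    intro i hiG
    obtain ⟨h1, h2, h3⟩ := hG i hiG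
    refine ⟨by rw [h3]; exact h1, by rw [h3]; rfl, by rw [h3]; exact h2 wj⟩
  have hnk : ∀ i ∉ G, ¬ keepc U x (prof z) wj i := by
    intro i hiG hK
    have h := hK.1
    rw [hd i hiG] at h
    exact Mood.noConfusion h
  have hzj : z j = (⟨prof z j, U j (prof z) wj, Mood.content⟩ : AgentState (A j)) := by
    have h : (⟨(z j).act, (z j).util, (z j).mood⟩ : AgentState (A j))
        = ⟨prof z j, U j (prof z) wj, Mood.content⟩ := by rw [hjc, hwj]; rfl
    exact h
  have hyj : y j = (⟨prof z j, U j (prof z) wj, Mood.content⟩ : AgentState (A j)) := by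
    have : y j = z j := if_pos (Finset.mem_insert_self j G)
    rw [this, hzj]
  have hcase : ∀ i, (keepc U x (prof z) wj i → y i = x i) ∧
      (¬ keepc U x (prof z) wj i →
        y i = ⟨prof z i, U i (prof z) wj, Mood.content⟩ ∨
        y i = ⟨prof z i, U i (prof z) wj, Mood.discontent⟩) := by
    intro i
    by_cases hiG : i ∈ G
    · refine ⟨fun _ => ?_, fun hnki => absurd (hKi i hiG) hnki⟩
      have h1 : y i = z i := if_pos (Finset.mem_insert_of_mem hiG)
      rw [h1, (hG i hiG).2.2]
    · refine ⟨fun hK => absurd hK (hnk i hiG), fun _ => ?_⟩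
      by_cases hij : i = j
      · subst hij
        exact Or.inl hyj
      · have hni : i ∉ insert j G := by
          rw [Finset.mem_insert]
          push_neg
          exact ⟨hij, hiG⟩
        exact Or.inr (if_neg hni)
  obtain ⟨c₀, hc₀, hev⟩ := master U Prw c hc0 hU hPrw x y (prof z) wj hcase
  have hsum : (∑ i, bexp U c x y (prof z) wj i) = 1 - U j (prof z) wj := by
    have hz0 : ∀ i ∈ Finset.univ, i ≠ j → bexp U c x y (prof z) wj i = 0 := by
      intro i _ hij
      unfold bexp
      by_cases hiG : i ∈ G
      · rw [if_neg (fun h => h.2 (hKi i hiG).2.1), if_neg (fun h => h.1 (hKi i hiG)),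
          add_zero]
      · have hni : i ∉ insert j G := by
          rw [Finset.mem_insert]
          push_neg
          exact ⟨hij, hiG⟩
        have hx1 : y i = (⟨prof z i, U i (prof z) wj, Mood.discontent⟩ : AgentState (A i)) :=
          if_neg hni
        rw [if_neg (fun h => by
            have h1 := h.1
            rw [hd i hiG] at h1
            exact Mood.noConfusion h1),
          if_neg (fun h => by
            have h2 := h.2
            rw [hx1] at h2
            simp at h2), add_zero]
    have hjval : bexp U c x y (prof z) wj j = 1 - U j (prof z) wj := by
      unfold bexp
      rw [if_neg (fun h => by
          have h1 := h.1
          rw [hd j hjG] at h1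
          exact Mood.noConfusion h1),
        if_pos ⟨hnk j hjG, hyj⟩, zero_add]
    rw [Finset.sum_eq_single_of_mem j (Finset.mem_univ j) hz0, hjval]
  rw [hsum] at hev
  exact exists_transRes U Prw c hc0 hU hPrw hPrw1 x y hc₀ hev

end AuxStatement12f


section AuxStatement12g

set_option linter.unusedVariables false
set_option linter.unusedSectionVars false

variable {n : ℕ} {A : Fin n → Type*} {W : Type*}
variable [∀ i, Fintype (A i)] [∀ i, Nonempty (A i)] [Fintype W] [Nonempty W]
variable (U : ∀ i : Fin n, (∀ j, A j) → W → ℝ) (Prw : W → ℝ) (c : ℝ)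

/-- Sequential acceptance of the agents in the list `S` towards the target state `z`. -/
lemma FIN (hc0 : 0 < c)
    (hU : ∀ (i : Fin n) (a : ∀ j, A j) (w : W), U i a w ∈ Set.Ico (0:ℝ) 1)
    (hPrw : ∀ w : W, 0 < Prw w) (hPrw1 : (∑ w : W, Prw w) = 1) (z : JState A) :
    ∀ (S : List (Fin n)) (G : Finset (Fin n)) (x₀ : JState A),
    (∀ i ∈ G, (z i).mood = Mood.content ∧
      (∀ w : W, |U i (prof z) w - (z i).util| ≤ rho U) ∧ x₀ i = z i) →
    (∀ i ∉ G, (x₀ i).mood = Mood.discontent) →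
    (∀ j ∈ S, (z j).mood = Mood.content ∧ (∃ w : W, (z j).util = U j (prof z) w) ∧
      (∀ w : W, |U j (prof z) w - (z j).util| ≤ rho U)) →
    ∃ (y : JState A) (r : ℝ), (∀ i, (i ∈ G ∨ i ∈ S) → y i = z i) ∧
      (∀ i, i ∉ G → i ∉ S → (y i).mood = Mood.discontent) ∧
      0 ≤ r ∧ r ≤ (S.length : ℝ) ∧ PR0 U Prw c x₀ y r := by
  intro S
  induction S with
  | nil =>
    intro G x₀ hG hX hS
    refine ⟨x₀, 0, ?_, ?_, le_refl 0, by simp, Or.inl ⟨rfl, rfl⟩⟩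
    · intro i hi
      rcases hi with hi | hi
      · exact (hG i hi).2.2
      · exact absurd hi List.not_mem_nil
    · intro i hi _
      exact hX i hi
  | cons j S' ih =>
    intro G x₀ hG hX hS
    by_cases hjG : j ∈ G
    · obtain ⟨y, r, h1, h2, h3, h4, h5⟩ := ih G x₀ hG hX
        (fun j' hj' => hS j' (List.mem_cons_of_mem j hj'))
      refine ⟨y, r, ?_, ?_, h3, ?_, h5⟩
      · intro i hi
        rcases hi with hi | hi
        · exact h1 i (Or.inl hi)
        · rcases List.mem_cons.mp hi with hi | hi
          · subst hi; exact h1 i (Or.inl hjG)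
          · exact h1 i (Or.inr hi)
      · intro i hiG hiS
        exact h2 i hiG (fun h => hiS (List.mem_cons_of_mem j h))
      · refine le_trans h4 ?_
        rw [List.length_cons]
        push_cast
        linarith
    · obtain ⟨hjc, ⟨wj, hwj⟩, hjρ⟩ := hS j List.mem_cons_self
      obtain ⟨r₁, hr₁0, hr₁b, hTR⟩ :=
        trans_finstep U Prw c hc0 hU hPrw hPrw1 z x₀ G j hjG wj
          (fun i hi => ⟨(hG i hi).1, (hG i hi).2.1, (hG i hi).2.2⟩) hX hjc hwj
      set x₁ : JState A := fun i => if i ∈ insert j G then z i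
        else ⟨prof z i, U i (prof z) wj, Mood.discontent⟩ with hx₁
      obtain ⟨y, r₂, h21, h22, h23, h24, h25⟩ := ih (insert j G) x₁
        (by
          intro i hi
          rcases Finset.mem_insert.mp hi with hi' | hi'
          · subst hi'
            exact ⟨hjc, hjρ, if_pos (Finset.mem_insert_self i G)⟩
          · exact ⟨(hG i hi').1, (hG i hi').2.1, if_pos hi⟩)
        (by
          intro i hi
          have : x₁ i = (⟨prof z i, U i (prof z) wj, Mood.discontent⟩ : AgentState (A i)) :=
            if_neg hi
          rw [this])
        (fun j' hj' => hS j' (List.mem_cons_of_mem j hj'))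
      have hu0 : 0 ≤ U j (prof z) wj := (hU j (prof z) wj).1
      refine ⟨y, r₁ + r₂, ?_, ?_, by linarith, ?_, Or.inr (pathres_cons_pr0 U Prw c hTR h25)⟩
      · intro i hi
        rcases hi with hi | hi
        · exact h21 i (Or.inl (Finset.mem_insert_of_mem hi))
        · rcases List.mem_cons.mp hi with hi | hi
          · subst hi; exact h21 i (Or.inl (Finset.mem_insert_self i G))
          · exact h21 i (Or.inr hi)
      · intro i hiG hiS
        have hij : i ≠ j := fun h => hiS (h ▸ (List.mem_cons_self : j ∈ j :: S'))
        refine h22 i ?_ (fun h => hiS (List.mem_cons_of_mem j h))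
        rw [Finset.mem_insert]
        push_neg
        exact ⟨hij, hiG⟩
      · rw [List.length_cons]
        push_cast
        linarith

/-- Rebuilding a `Cm` state from an arbitrary all-discontent state. -/
lemma BUILD (hc0 : 0 < c)
    (hU : ∀ (i : Fin n) (a : ∀ j, A j) (w : W), U i a w ∈ Set.Ico (0:ℝ) 1)
    (hPrw : ∀ w : W, 0 < Prw w) (hPrw1 : (∑ w : W, Prw w) = 1) :
    ∀ (k : ℕ) (z : JState A), z ∈ Cm U Prw c k →
    ∀ (T : Finset (Fin n)) (x₀ : JState A), (∀ i, (x₀ i).mood = Mood.discontent) →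
    ∃ (y : JState A) (r : ℝ), (∀ i ∈ T, y i = z i) ∧
      (∀ i ∉ T, (y i).mood = Mood.discontent) ∧ 0 ≤ r ∧ r ≤ (T.card : ℝ) ∧
      PR0 U Prw c x₀ y r := by
  intro k
  induction k with
  | zero =>
    intro z hz T x₀ hx₀
    simp only [Cm, Set.mem_setOf_eq] at hz
    obtain ⟨hzS, hzc, hzB⟩ := hz
    obtain ⟨y, r, h1, h2, h3, h4, h5⟩ := FIN U Prw c hc0 hU hPrw hPrw1 z T.toList ∅ x₀
      (by simp)
      (fun i _ => hx₀ i)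
      (by
        intro j hj
        have hB := hzB j
        simp only [Bset, Set.mem_setOf_eq] at hB
        obtain ⟨_, hex, hρ⟩ := hB
        refine ⟨hzc j, hex, fun w => ?_⟩
        rw [abs_sub_comm]
        exact hρ w)
    refine ⟨y, r, ?_, ?_, h3, ?_, h5⟩
    · intro i hi
      exact h1 i (Or.inr (Finset.mem_toList.mpr hi))
    · intro i hi
      exact h2 i (by simp) (fun h => hi (Finset.mem_toList.mp h))
    · rwa [Finset.length_toList] at h4
  | succ k ihk =>
    intro z hz T x₀ hx₀
    simp only [Cm, Set.mem_setOf_eq] at hz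
    obtain ⟨hzS, hzc, J, hJne, hJd, hJc, hBl, z', hz', hrest⟩ := hz
    set JL : Finset (Fin n) := J (Fin.last (k+1)) with hJL
    obtain ⟨y₁, r₁, h11, h12, h13, h14, h15⟩ := ihk z' hz' (T \ JL) x₀ hx₀
    obtain ⟨y, r₂, h21, h22, h23, h24, h25⟩ :=
      FIN U Prw c hc0 hU hPrw hPrw1 z ((T ∩ JL).toList) (T \ JL) y₁
      (by
        intro i hi
        have hni : i ∉ JL := (Finset.mem_sdiff.mp hi).2
        obtain ⟨hzz', hρ⟩ := hrest i hni
        refine ⟨hzc i, fun w => ?_, ?_⟩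
        · rw [abs_sub_comm, hzz']
          exact hρ w
        · rw [h11 i hi, hzz']
      )
      (fun i hi => h12 i hi)
      (by
        intro j hj
        have hjJL : j ∈ JL := (Finset.mem_inter.mp (Finset.mem_toList.mp hj)).2
        have hB := hBl j hjJL
        simp only [Bset, Set.mem_setOf_eq] at hB
        obtain ⟨_, hex, hρ⟩ := hB
        refine ⟨hzc j, hex, fun w => ?_⟩
        rw [abs_sub_comm]
        exact hρ w)
    have hcards : ((T \ JL).card : ℝ) + ((T ∩ JL).card : ℝ) = (T.card : ℝ) := by
      exact_mod_cast Finset.card_sdiff_add_card_inter T JL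
    refine ⟨y, r₁ + r₂, ?_, ?_, by linarith, ?_, pr0_trans U Prw c h15 h25⟩
    · intro i hi
      by_cases hiJ : i ∈ JL
      · exact h21 i (Or.inr (Finset.mem_toList.mpr (Finset.mem_inter.mpr ⟨hi, hiJ⟩)))
      · exact h21 i (Or.inl (Finset.mem_sdiff.mpr ⟨hi, hiJ⟩))
    · intro i hi
      refine h22 i (fun h => hi (Finset.mem_sdiff.mp h).1)
        (fun h => hi (Finset.mem_inter.mp (Finset.mem_toList.mp h)).1)
    · rw [Finset.length_toList] at h24
      linarith

end AuxStatement12g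


section AuxStatement12h

set_option linter.unusedVariables false
set_option linter.unusedSectionVars false

variable {n : ℕ} {A : Fin n → Type*} {W : Type*}
variable [∀ i, Fintype (A i)] [∀ i, Nonempty (A i)] [Fintype W] [Nonempty W]
variable (U : ∀ i : Fin n, (∀ j, A j) → W → ℝ) (Prw : W → ℝ) (c : ℝ)

/-- Every state of `C^m` (`m ≥ 1`) is all-content and `ρ`-aligned. -/
lemma cm_facts (k : ℕ) (z : JState A) (hz : z ∈ Cm U Prw c (k+1)) :
    allContent z ∧ ∀ (i : Fin n) (w : W), |U i (prof z) w - (z i).util| ≤ rho U := by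
  simp only [Cm, Set.mem_setOf_eq] at hz
  obtain ⟨hzS, hzc, J, hJne, hJd, hJc, hBl, z', hz', hrest⟩ := hz
  refine ⟨hzc, fun i w => ?_⟩
  by_cases hi : i ∈ J (Fin.last (k+1))
  · have hB := hBl i hi
    simp only [Bset, Set.mem_setOf_eq] at hB
    rw [abs_sub_comm]
    exact hB.2.2 w
  · obtain ⟨hzz', hρ⟩ := hrest i hi
    rw [abs_sub_comm, hzz']
    exact hρ w

/-- In an interdependent game with at least two agents, every agent has at least two actions. -/
lemma two_le_card_aux (hU : ∀ (i : Fin n) (a : ∀ j, A j) (w : W), U i a w ∈ Set.Ico (0:ℝ) 1)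
    (hInter : Interdependent U) (hn2 : 2 ≤ n) (j : Fin n) :
    2 ≤ Fintype.card (A j) := by
  by_contra hcon
  push_neg at hcon
  haveI hsub : Subsingleton (A j) := by
    have h1 : Fintype.card (A j) ≤ 1 := by omega
    exact Fintype.card_le_one_iff_subsingleton.mp h1
  haveI hnt : Nontrivial (Fin n) := by
    refine ⟨⟨⟨0, by omega⟩, ⟨1, by omega⟩, ?_⟩⟩
    simp [Fin.ext_iff]
  obtain ⟨j', hj'⟩ := exists_ne j
  have hne_univ : ({j} : Set (Fin n)) ≠ Set.univ := by
    intro h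
    have : j' ∈ ({j} : Set (Fin n)) := h ▸ Set.mem_univ j'
    exact hj' this
  obtain ⟨i, hiJ, a', ha', w', habs⟩ :=
    hInter (fun i => Classical.arbitrary (A i)) (Classical.arbitrary W) {j}
      ⟨j, rfl⟩ hne_univ
  have haa : a' = (fun i => Classical.arbitrary (A i)) := by
    funext jj
    by_cases hjj : jj ∈ ({j} : Set (Fin n))
    · have hjj' : jj = j := hjj
      subst hjj'
      exact Subsingleton.elim _ _
    · exact ha' jj hjj
  rw [haa] at habs
  exact absurd habs (not_lt.mpr (abs_le_rho U hU i _ w' _))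

end AuxStatement12h


/-- Table I, row 6: for `0 < m < n` and distinct `z^m₁, z^m₂ ∈ C^m`,
the resistance between `{z^m₁}` and `{z^m₂}` satisfies `c ≤ r ≤ r̄_m`, where
`r̄_m = m c² + ((4 + m − m²)/2) c − m(m+1)/2`. -/
theorem resistance_Cm_to_Cm {n : ℕ} {A : Fin n → Type*} {W : Type*}
    [∀ i, Fintype (A i)] [∀ i, Nonempty (A i)] [Fintype W] [Nonempty W]
    (U : ∀ i : Fin n, (∀ j, A j) → W → ℝ) (Prw : W → ℝ) (c : ℝ)
    (hn : 0 < n)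
    (hU : ∀ (i : Fin n) (a : ∀ j, A j) (w : W), U i a w ∈ Set.Ico (0:ℝ) 1)
    (hPrw : ∀ w : W, 0 < Prw w) (hPrw1 : (∑ w : W, Prw w) = 1)
    (hc : (n : ℝ) < c)
    (hInter : Interdependent U) :
    ∀ m : ℕ, 0 < m → m < n →
      ∀ zm1 ∈ Cm U Prw c m, ∀ zm2 ∈ Cm U Prw c m, zm1 ≠ zm2 →
        ∀ r : ℝ, ClassResIs (TransRes U Prw c) {zm1} {zm2} r →
          c ≤ r ∧
          r ≤ (m : ℝ) * c ^ 2 + ((4 + (m : ℝ) - (m : ℝ) ^ 2) / 2) * c -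
                (m : ℝ) * ((m : ℝ) + 1) / 2 := by
  intro m hm0 hmn zm1 hzm1 zm2 hzm2 hne r hCR
  obtain ⟨hex, hmin⟩ := hCR
  have hn2 : 2 ≤ n := by omega
  have hc0 : 0 < c := by
    have h0 : (0:ℝ) ≤ (n:ℝ) := Nat.cast_nonneg n
    linarith
  obtain ⟨k, rfl⟩ : ∃ k, m = k + 1 := ⟨m - 1, by omega⟩
  have hfacts := cm_facts U Prw c k zm1 hzm1
  obtain ⟨x, hx, y, hy, hpath⟩ := hex
  rw [Set.mem_singleton_iff] at hx hy
  rw [hx, hy] at hpath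
  constructor
  · exact path_lower U Prw c hc0 hU hPrw hPrw1 zm1 hfacts.1 hfacts.2 hpath rfl
      (Ne.symm hne)
  · have hbex : ∀ i : Fin n, ∃ bi : A i, bi ≠ (zm1 i).act := by
      intro i
      have h1 : 1 < Fintype.card (A i) := two_le_card_aux U hU hInter hn2 i
      have : Nontrivial (A i) := Fintype.one_lt_card_iff_nontrivial.mp h1
      exact exists_ne _
    choose b hbne using hbex
    obtain ⟨w₀⟩ := (inferInstance : Nonempty W)
    obtain ⟨r0, hr00, hr0b, hTR⟩ :=
      trans_experiment U Prw c hc0 hU hPrw hPrw1 zm1 hfacts.1 b hbne w₀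
    obtain ⟨y2, rb, hy2, _hmood, hrb0, hrbc, hPR⟩ :=
      BUILD U Prw c hc0 hU hPrw hPrw1 (k+1) zm2 hzm2 Finset.univ
        (fun i => ⟨b i, U i b w₀, Mood.discontent⟩) (fun i => rfl)
    have hy2z : y2 = zm2 := funext fun i => hy2 i (Finset.mem_univ i)
    rw [hy2z] at hPR
    have hpath2 : PathRes (TransRes U Prw c) zm1 zm2 (r0 + rb) :=
      pathres_cons_pr0 U Prw c hTR hPR
    have hle : r ≤ r0 + rb := hmin zm1 rfl zm2 rfl (r0 + rb) hpath2
    have hrbn : rb ≤ (n:ℝ) := by simpa using hrbc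
    have hnR : (2:ℝ) ≤ (n:ℝ) := by exact_mod_cast hn2
    have hMn : ((k:ℝ) + 1) + 1 ≤ (n:ℝ) := by exact_mod_cast hmn
    have hcM1 : ((k:ℝ) + 1) + 1 ≤ c := by linarith
    have hk0 : (0:ℝ) ≤ (k:ℝ) := Nat.cast_nonneg k
    have h2 : r0 + rb ≤ c * c + c := by
      nlinarith [mul_pos (sub_pos.mpr hc) hc0]
    have t1 : (0:ℝ) ≤ ((k:ℝ) + 1 - 1) * c * (c - (((k:ℝ) + 1) + 1)) := by
      apply mul_nonneg (mul_nonneg (by linarith) hc0.le)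
      linarith
    have t2 : (0:ℝ) ≤ (((k:ℝ) + 1) * (((k:ℝ) + 1) + 1) / 2) * (c - 1) := by
      apply mul_nonneg (by positivity)
      linarith
    have h3 : c * c + c ≤ ((k:ℝ) + 1) * c ^ 2 +
        ((4 + ((k:ℝ) + 1) - ((k:ℝ) + 1) ^ 2) / 2) * c -
        ((k:ℝ) + 1) * (((k:ℝ) + 1) + 1) / 2 := by
      nlinarith [t1, t2]
    have hcast : ((k + 1 : ℕ) : ℝ) = (k:ℝ) + 1 := by push_cast; ring
    rw [hcast]
    linarith

end Paper
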